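/- The monoid DORPₙ of monotone order-decreasing partial transformations of [n] is R-trivial: if ρ, σ ∈ DORPₙ generate the same principal right ideal (ρ·DORPₙ¹ = σ·DORPₙ¹), then ρ = σ. -/

import Mathlib

/-- A partial transformation of the chain `[n]` (elements of `Fin n`). -/
def PT (n : ℕ) := Fin n → Option (Fin n)

/-- Right-to-left composition: `x (ρσ) = (x ρ) σ`. -/
def comp {n : ℕ} (ρ σ : PT n) : PT n := fun x => (ρ x).bind σ

/-- The identity partial transformation. -/
def idPT (n : ℕ) : PT n := fun x => some x

/-- Isotone (order-preserving) on its domain. -/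
def IsIsotone {n : ℕ} (ρ : PT n) : Prop :=
  ∀ x x' y y' : Fin n, ρ x = some y → ρ x' = some y' → x ≤ x' → y ≤ y'

/-- Antitone (order-reversing) on its domain. -/
def IsAntitone {n : ℕ} (ρ : PT n) : Prop :=
  ∀ x x' y y' : Fin n, ρ x = some y → ρ x' = some y' → x ≤ x' → y' ≤ y

/-- Order-decreasing on its domain. -/
def IsDecreasing {n : ℕ} (ρ : PT n) : Prop :=
  ∀ x y : Fin n, ρ x = some y → y ≤ x

/-- Member of the monoid `DORPₙ`: monotone and order-decreasing. -/
def IsDORP {n : ℕ} (ρ : PT n) : Prop :=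
  IsDecreasing ρ ∧ (IsIsotone ρ ∨ IsAntitone ρ)

/-- The image of a partial transformation. -/
def im {n : ℕ} (ρ : PT n) : Set (Fin n) := {y | ∃ x, ρ x = some y}

/-- The domain of a partial transformation. -/
def domSet {n : ℕ} (ρ : PT n) : Set (Fin n) := {x | ρ x ≠ none}

/-- The height of a partial transformation: the size of its image. -/
noncomputable def height {n : ℕ} (ρ : PT n) : ℕ := (im ρ).ncard

/-- Equality of kernels: same domain and the same partition into fibers. -/
def kerEq {n : ℕ} (ρ σ : PT n) : Prop :=
  (∀ x, ρ x = none ↔ σ x = none) ∧ (∀ x y, ρ x = ρ y ↔ σ x = σ y)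

/-- `DORPₙ` is `R`-trivial: two elements generating the same principal right ideal
are equal (note `idPT n ∈ DORPₙ`, so `ρ·DORPₙ¹ = ρ·DORPₙ`). -/
theorem stmt8 (n : ℕ) (ρ σ : PT n) (hρ : IsDORP ρ) (hσ : IsDORP σ)
    (h : ∀ x : PT n, (∃ τ, IsDORP τ ∧ comp ρ τ = x) ↔ (∃ τ, IsDORP τ ∧ comp σ τ = x)) :
    ρ = σ := by
  have hid : IsDORP (idPT n) := by
    refine ⟨fun x y hxy => ?_, Or.inl fun x x' y y' hx hx' hle => ?_⟩
    · simp only [idPT, Option.some.injEq] at hxy; exact hxy ▸ le_refl x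
    · simp only [idPT, Option.some.injEq] at hx hx'; rw [← hx, ← hx']; exact hle
  obtain ⟨τ, hτ, hcτ⟩ := (h σ).mpr ⟨idPT n, hid, by funext x; cases hx : σ x <;> simp [comp, idPT, hx] <;> rfl⟩
  obtain ⟨τ', hτ', hcτ'⟩ := (h ρ).mp ⟨idPT n, hid, by funext x; cases hx : ρ x <;> simp [comp, idPT, hx] <;> rfl⟩
  funext x
  have h1 : σ x = (ρ x).bind τ := by rw [← hcτ]; rfl
  have h2 : ρ x = (σ x).bind τ' := by rw [← hcτ']; rfl
  cases hρx : ρ x with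
  | none => rw [h1, hρx]; rfl
  | some y =>
    rw [hρx] at h1 h2
    simp only [Option.bind] at h1
    cases hτy : τ y with
    | none => rw [hτy] at h1; rw [h1] at h2; exact absurd h2 (by simp [Option.bind])
    | some z =>
      rw [hτy] at h1
      rw [h1] at h2 ⊢
      simp only [Option.bind] at h2
      have hzy : z ≤ y := hτ.1 y z hτy
      have hyz : y ≤ z := hτ'.1 z y h2.symm
      rw [le_antisymm hzy hyz]
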